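/- arXiv:0907.0534 — 6 statements merged into one kernel-verified Lean document; each statement's English description precedes it below -/
import Mathlib

section
/- Let H(x,y,t) = -(1/2) ln((x + a cos t)² + (y + a sin t)²) and let ℋ₁(x,y,t,e) = H(x,y,t) + e be its autonomous extension on the extended phase space with symplectic form dx∧dy + dt∧de. Then ℋ₂(x,y,t) = ((x + a cos t)² + (y + a sin t)²) e^{-x²-y²} is a first integral of ℋ₁: the Poisson bracket {ℋ₁, ℋ₂} vanishes wherever H is defined. -/
/-- `ℋ₂(x,y,t) = ((x + a cos t)² + (y + a sin t)²) e^{-x²-y²}` is a first integral of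
the autonomous extension `ℋ₁(x,y,t,e) = H(x,y,t) + e` of
`H(x,y,t) = -(1/2) ln((x + a cos t)² + (y + a sin t)²)` for the symplectic form
`dx∧dy + dt∧de`: the Poisson bracket
`{ℋ₁,ℋ₂} = ∂ℋ₁/∂x ∂ℋ₂/∂y - ∂ℋ₁/∂y ∂ℋ₂/∂x + ∂ℋ₁/∂t ∂ℋ₂/∂e - ∂ℋ₁/∂e ∂ℋ₂/∂t`
vanishes wherever `H` is defined.  Since `ℋ₂` does not depend on `e` and
`∂ℋ₁/∂e = 1`, this reads as below. -/
theorem stmt7 (a : ℝ)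
    (V H H2 : ℝ → ℝ → ℝ → ℝ)
    (hV : ∀ x y t, V x y t = (x + a * Real.cos t)^2 + (y + a * Real.sin t)^2)
    (hH : ∀ x y t, H x y t = -(1/2) * Real.log (V x y t))
    (hH2 : ∀ x y t, H2 x y t = V x y t * Real.exp (-x^2 - y^2)) :
    ∀ x y t, 0 < V x y t →
      deriv (fun x' => H x' y t) x * deriv (fun y' => H2 x y' t) y
        - deriv (fun y' => H x y' t) y * deriv (fun x' => H2 x' y t) x
        - deriv (fun t' => H2 x y t') t = 0 := by
  intro x y t h0
  have hVne : (x + a * Real.cos t)^2 + (y + a * Real.sin t)^2 ≠ 0 := by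
    rw [hV] at h0; exact ne_of_gt h0
  set u : ℝ := x + a * Real.cos t with hu
  set v : ℝ := y + a * Real.sin t with hv
  set E : ℝ := Real.exp (-x^2 - y^2) with hE
  -- derivative of V in x direction
  have hVx : HasDerivAt (fun x' => (x' + a * Real.cos t)^2 + (y + a * Real.sin t)^2)
      (2 * u) x := by
    have h := (((hasDerivAt_id x).add_const (a * Real.cos t)).pow 2).add_const
      ((y + a * Real.sin t)^2)
    simpa [hu, mul_comm] using h
  have hVy : HasDerivAt (fun y' => (x + a * Real.cos t)^2 + (y' + a * Real.sin t)^2)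
      (2 * v) y := by
    have h := (((hasDerivAt_id y).add_const (a * Real.sin t)).pow 2).const_add
      ((x + a * Real.cos t)^2)
    simpa [hv, mul_comm] using h
  have hVt : HasDerivAt (fun t' => (x + a * Real.cos t')^2 + (y + a * Real.sin t')^2)
      (2 * u * (a * -Real.sin t) + 2 * v * (a * Real.cos t)) t := by
    have h1 : HasDerivAt (fun t' => (x + a * Real.cos t')^2) (2 * u * (a * -Real.sin t)) t := by
      have := (((Real.hasDerivAt_cos t).const_mul a).const_add x).pow 2
      simpa [Pi.pow_def, hu, mul_comm, mul_assoc, mul_left_comm] using this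
    have h2 : HasDerivAt (fun t' => (y + a * Real.sin t')^2) (2 * v * (a * Real.cos t)) t := by
      have := (((Real.hasDerivAt_sin t).const_mul a).const_add y).pow 2
      simpa [Pi.pow_def, hv, mul_comm, mul_assoc, mul_left_comm] using this
    exact h1.add h2
  -- derivative of exp factor
  have hEx : HasDerivAt (fun x' : ℝ => Real.exp (-x'^2 - y^2)) (E * (-(2*x))) x := by
    have hin : HasDerivAt (fun x' : ℝ => -x'^2 - y^2) (-(2*x)) x := by
      have := (((hasDerivAt_id x).pow 2).neg).sub_const (y^2)
      simpa [mul_comm] using this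
    simpa [Function.comp_def, hE] using (Real.hasDerivAt_exp (-x^2 - y^2)).comp x hin
  have hEy : HasDerivAt (fun y' : ℝ => Real.exp (-x^2 - y'^2)) (E * (-(2*y))) y := by
    have hin : HasDerivAt (fun y' : ℝ => -x^2 - y'^2) (-(2*y)) y := by
      have := (((hasDerivAt_id y).pow 2)).const_sub (-x^2)
      simpa [mul_comm, sub_eq_add_neg] using this.neg.neg
    simpa [Function.comp_def, hE] using (Real.hasDerivAt_exp (-x^2 - y^2)).comp y hin
  -- H derivatives
  have hHx : deriv (fun x' => H x' y t) x = -(1/2) * ((u^2 + v^2)⁻¹ * (2*u)) := by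
    have heq : (fun x' => H x' y t)
        = fun x' => -(1/2) * Real.log ((x' + a * Real.cos t)^2 + (y + a * Real.sin t)^2) := by
      funext x'; rw [hH, hV]
    rw [heq]
    have := ((Real.hasDerivAt_log hVne).comp x hVx).const_mul (-(1/2) : ℝ)
    simpa [hu, hv] using this.deriv
  have hHy : deriv (fun y' => H x y' t) y = -(1/2) * ((u^2 + v^2)⁻¹ * (2*v)) := by
    have heq : (fun y' => H x y' t)
        = fun y' => -(1/2) * Real.log ((x + a * Real.cos t)^2 + (y' + a * Real.sin t)^2) := by
      funext y'; rw [hH, hV]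
    rw [heq]
    have := ((Real.hasDerivAt_log hVne).comp y hVy).const_mul (-(1/2) : ℝ)
    simpa [hu, hv] using this.deriv
  -- H2 derivatives
  have hH2x : deriv (fun x' => H2 x' y t) x = 2*u * E + (u^2 + v^2) * (E * (-(2*x))) := by
    have heq : (fun x' => H2 x' y t)
        = fun x' => ((x' + a * Real.cos t)^2 + (y + a * Real.sin t)^2) * Real.exp (-x'^2 - y^2) := by
      funext x'; rw [hH2, hV]
    rw [heq]
    have := hVx.mul hEx
    simpa [Pi.mul_def, hu, hv, hE] using this.deriv
  have hH2y : deriv (fun y' => H2 x y' t) y = 2*v * E + (u^2 + v^2) * (E * (-(2*y))) := by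
    have heq : (fun y' => H2 x y' t)
        = fun y' => ((x + a * Real.cos t)^2 + (y' + a * Real.sin t)^2) * Real.exp (-x^2 - y'^2) := by
      funext y'; rw [hH2, hV]
    rw [heq]
    have := hVy.mul hEy
    simpa [Pi.mul_def, hu, hv, hE] using this.deriv
  have hH2t : deriv (fun t' => H2 x y t') t
      = (2 * u * (a * -Real.sin t) + 2 * v * (a * Real.cos t)) * E := by
    have heq : (fun t' => H2 x y t')
        = fun t' => ((x + a * Real.cos t')^2 + (y + a * Real.sin t')^2) * Real.exp (-x^2 - y^2) := by
      funext t'; rw [hH2, hV]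
    rw [heq]
    have := hVt.mul_const (Real.exp (-x^2 - y^2))
    simpa [hE] using this.deriv
  rw [hHx, hHy, hH2x, hH2y, hH2t]
  have hne : u^2 + v^2 ≠ 0 := by simpa [hu, hv] using hVne
  field_simp [hu, hv]
  ring
end

section
/- ℋ₂(x,y,t) = ((x + a cos t)² + (y + a sin t)²) e^{-x²-y²} is constant along every solution of the system ẋ = (-y - a sin t)/Ṽ, ẏ = (x + a cos t)/Ṽ with Ṽ(x,y,t) = (x + a cos t)² + (y + a sin t)²: d/dt [ℋ₂(x(t),y(t),t)] = 0. -/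
/-- `ℋ₂(x,y,t) = ((x + a cos t)² + (y + a sin t)²) e^{-x²-y²}` is constant along
every solution of `ẋ = (-y - a sin t)/Ṽ`, `ẏ = (x + a cos t)/Ṽ` with
`Ṽ = (x + a cos t)² + (y + a sin t)²`, on an interval where `Ṽ > 0`:
`d/dt[ℋ₂(x(t),y(t),t)] = 0`. -/
theorem stmt8 (a t₀ t₁ : ℝ) (x y : ℝ → ℝ)
    (V : ℝ → ℝ → ℝ → ℝ)
    (hV : ∀ x' y' t, V x' y' t = (x' + a * Real.cos t)^2 + (y' + a * Real.sin t)^2)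
    (hpos : ∀ t ∈ Set.Ioo t₀ t₁, 0 < V (x t) (y t) t)
    (hx : ∀ t ∈ Set.Ioo t₀ t₁,
      HasDerivAt x ((-(y t) - a * Real.sin t) / V (x t) (y t) t) t)
    (hy : ∀ t ∈ Set.Ioo t₀ t₁,
      HasDerivAt y ((x t + a * Real.cos t) / V (x t) (y t) t) t) :
    ∀ t ∈ Set.Ioo t₀ t₁,
      HasDerivAt (fun s => V (x s) (y s) s * Real.exp (-(x s)^2 - (y s)^2)) 0 t := by
  intro t ht
  have hVt := hpos t ht
  have hVne : V (x t) (y t) t ≠ 0 := ne_of_gt hVt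
  have hx' := hx t ht
  have hy' := hy t ht
  set xd := (-(y t) - a * Real.sin t) / V (x t) (y t) t with hxd
  set yd := (x t + a * Real.cos t) / V (x t) (y t) t with hyd
  have hc : HasDerivAt (fun s => x s + a * Real.cos s) (xd + a * (-Real.sin t)) t :=
    hx'.add ((Real.hasDerivAt_cos t).const_mul a)
  have hs : HasDerivAt (fun s => y s + a * Real.sin s) (yd + a * Real.cos t) t :=
    hy'.add ((Real.hasDerivAt_sin t).const_mul a)
  have hVd := (hc.pow 2).add (hs.pow 2)
  have hg : HasDerivAt (fun s => -(x s)^2 - (y s)^2)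
      (-(2 * x t ^ 1 * xd) - 2 * y t ^ 1 * yd) t := (hx'.pow 2).neg.sub (hy'.pow 2)
  have hexp := hg.exp
  have hmul := hVd.mul hexp
  have heq : (fun s => V (x s) (y s) s * Real.exp (-(x s)^2 - (y s)^2))
      = (fun s => ((x s + a * Real.cos s)^2 + (y s + a * Real.sin s)^2)
          * Real.exp (-(x s)^2 - (y s)^2)) := by
    funext s; rw [hV]
  rw [heq]
  convert hmul using 1
  any_goals rfl
  rw [hxd, hyd, hV]
  have h2 : (x t + a * Real.cos t)^2 + (y t + a * Real.sin t)^2 ≠ 0 := by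
    rw [← hV]; exact hVne
  simp only [Pi.add_apply, Pi.pow_apply]
  field_simp
  ring
end

section
/- For a > 0, the curves r_±(t) = (a_± cos t, a_± sin t) with a_± = (-a ± √(a²+4))/2 are 2π-periodic solutions of the system ẋ = (-y - a sin t)/Ṽ, ẏ = (x + a cos t)/Ṽ, where Ṽ = (x + a cos t)² + (y + a sin t)². -/
open Real

/-- For `a > 0`, the curves `r_±(t) = (a_± cos t, a_± sin t)` with
`a_± = (-a ± √(a²+4))/2` are `2π`-periodic solutions of
`ẋ = (-y - a sin t)/Ṽ`, `ẏ = (x + a cos t)/Ṽ`,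
`Ṽ = (x + a cos t)² + (y + a sin t)²`. -/
theorem stmt10 (a : ℝ) (ha : 0 < a)
    (V : ℝ → ℝ → ℝ → ℝ)
    (hV : ∀ x y t, V x y t = (x + a * Real.cos t)^2 + (y + a * Real.sin t)^2) :
    ∀ c ∈ ({(-a + Real.sqrt (a^2 + 4)) / 2, (-a - Real.sqrt (a^2 + 4)) / 2} : Set ℝ),
      ∀ t : ℝ,
        HasDerivAt (fun s => c * Real.cos s)
          ((-(c * Real.sin t) - a * Real.sin t) / V (c * Real.cos t) (c * Real.sin t) t) t ∧
        HasDerivAt (fun s => c * Real.sin s)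
          ((c * Real.cos t + a * Real.cos t) / V (c * Real.cos t) (c * Real.sin t) t) t ∧
        c * Real.cos (t + 2 * π) = c * Real.cos t ∧
        c * Real.sin (t + 2 * π) = c * Real.sin t := by
  intro c hc t
  have hs : Real.sqrt (a^2 + 4) ^ 2 = a^2 + 4 := Real.sq_sqrt (by positivity)
  have key : c * (c + a) = 1 := by
    rcases hc with h | h <;> subst h <;> nlinarith [hs]
  have hca : c + a ≠ 0 := by
    intro h; rw [h, mul_zero] at key; norm_num at key
  have hVval : V (c * Real.cos t) (c * Real.sin t) t = (c + a)^2 := by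
    rw [hV]
    have := Real.sin_sq_add_cos_sq t
    ring_nf
    nlinarith [Real.sin_sq_add_cos_sq t]
  have h1 : (-(c * Real.sin t) - a * Real.sin t) / V (c * Real.cos t) (c * Real.sin t) t
      = c * (-Real.sin t) := by
    rw [hVval]
    field_simp
    linear_combination (Real.sin t * (c + a)) * key
  have h2 : (c * Real.cos t + a * Real.cos t) / V (c * Real.cos t) (c * Real.sin t) t
      = c * Real.cos t := by
    rw [hVval]
    field_simp
    linear_combination (-(Real.cos t)) * key
  refine ⟨?_, ?_, by rw [Real.cos_add_two_pi], by rw [Real.sin_add_two_pi]⟩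
  · rw [h1]; exact (Real.hasDerivAt_cos t).const_mul c
  · rw [h2]; exact (Real.hasDerivAt_sin t).const_mul c
end

section
/- For the linear variational system (ẇ₁, ẇ₂)ᵀ = c² [[sin 2t, -cos 2t], [-cos 2t, -sin 2t]] (w₁, w₂)ᵀ with constant c² > 1, the pair w₁(t) = e^{λt}((1-c²)cos t - λ sin t), w₂(t) = e^{λt}((1-c²) sin t + λ cos t), where λ = √(c⁴-1), is a solution. -/
/-- For the variational system `(ẇ₁,ẇ₂)ᵀ = c²[[sin 2t, -cos 2t],[-cos 2t, -sin 2t]](w₁,w₂)ᵀ`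
with `c² > 1`, the pair `w₁(t) = e^{λt}((1-c²)cos t - λ sin t)`,
`w₂(t) = e^{λt}((1-c²)sin t + λ cos t)`, `λ = √(c⁴-1)`, is a solution. -/
theorem stmt13 (c lam : ℝ) (hc : 1 < c^2) (hlam : lam = Real.sqrt (c^4 - 1))
    (w₁ w₂ : ℝ → ℝ)
    (hw₁ : ∀ t, w₁ t = Real.exp (lam * t) * ((1 - c^2) * Real.cos t - lam * Real.sin t))
    (hw₂ : ∀ t, w₂ t = Real.exp (lam * t) * ((1 - c^2) * Real.sin t + lam * Real.cos t)) :
    ∀ t, HasDerivAt w₁ (c^2 * (Real.sin (2*t) * w₁ t - Real.cos (2*t) * w₂ t)) t ∧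
         HasDerivAt w₂ (c^2 * (-Real.cos (2*t) * w₁ t - Real.sin (2*t) * w₂ t)) t := by
  have hsq : lam ^ 2 = c ^ 4 - 1 := by
    rw [hlam, Real.sq_sqrt]; nlinarith
  intro t
  have hE : HasDerivAt (fun t => Real.exp (lam * t)) (lam * Real.exp (lam * t)) t := by
    have := (Real.hasDerivAt_exp (lam * t)).comp t
      ((hasDerivAt_id t).const_mul lam)
    simpa [mul_comm, Function.comp_def] using this
  have hcos : HasDerivAt Real.cos (-Real.sin t) t := Real.hasDerivAt_cos t
  have hsin : HasDerivAt Real.sin (Real.cos t) t := Real.hasDerivAt_sin t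
  have h1 : HasDerivAt (fun t => (1 - c^2) * Real.cos t - lam * Real.sin t)
      ((1 - c^2) * (-Real.sin t) - lam * Real.cos t) t :=
    ((hcos.const_mul _).sub (hsin.const_mul _))
  have h2 : HasDerivAt (fun t => (1 - c^2) * Real.sin t + lam * Real.cos t)
      ((1 - c^2) * Real.cos t + lam * (-Real.sin t)) t :=
    ((hsin.const_mul _).add (hcos.const_mul _))
  have d1 := hE.mul h1
  have d2 := hE.mul h2
  have e1 : (fun t => Real.exp (lam * t) * ((1 - c^2) * Real.cos t - lam * Real.sin t)) = w₁ := by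
    funext s; exact (hw₁ s).symm
  have e2 : (fun t => Real.exp (lam * t) * ((1 - c^2) * Real.sin t + lam * Real.cos t)) = w₂ := by
    funext s; exact (hw₂ s).symm
  simp only [Pi.mul_def] at d1 d2; rw [e1] at d1; rw [e2] at d2
  constructor
  · refine d1.congr_deriv (Eq.symm ?_)
    rw [hw₁ t, hw₂ t, Real.sin_two_mul, Real.cos_two_mul']
    have hp := Real.sin_sq_add_cos_sq t
    linear_combination Real.exp (lam*t) * (c^2*((1-c^2)*Real.sin t - lam*Real.cos t)) * hp
      + Real.exp (lam*t) * Real.sin t * hsq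
  · refine d2.congr_deriv (Eq.symm ?_)
    rw [hw₁ t, hw₂ t, Real.sin_two_mul, Real.cos_two_mul']
    have hp := Real.sin_sq_add_cos_sq t
    linear_combination Real.exp (lam*t) * (c^2*(-(1-c^2)*Real.cos t - lam*Real.sin t)) * hp
      - Real.exp (lam*t) * Real.cos t * hsq
end

section
/- For the linear variational system (ẇ₁, ẇ₂)ᵀ = c² [[sin 2t, -cos 2t], [-cos 2t, -sin 2t]] (w₁, w₂)ᵀ with 0 < c² < 1, writing z = w₁ + i w₂, the system is equivalent to the complex ODE ż = -i e^{2it} c² z̄, and all its solutions are bounded; the characteristic (Floquet) exponents are ±i√(1-c⁴). -/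
open Real


private lemma xy_derivs (c : ℝ) {w₁ w₂ : ℝ → ℝ}
    (hw : ∀ t, HasDerivAt w₁ (c^2 * (Real.sin (2*t) * w₁ t - Real.cos (2*t) * w₂ t)) t ∧
            HasDerivAt w₂ (c^2 * (-Real.cos (2*t) * w₁ t - Real.sin (2*t) * w₂ t)) t) :
    (∀ t, HasDerivAt (fun s => Real.cos s * w₁ s + Real.sin s * w₂ s)
        ((1 - c^2) * (-Real.sin t * w₁ t + Real.cos t * w₂ t)) t) ∧
    (∀ t, HasDerivAt (fun s => -Real.sin s * w₁ s + Real.cos s * w₂ s)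
        (-(1 + c^2) * (Real.cos t * w₁ t + Real.sin t * w₂ t)) t) := by
  have h1 : ∀ t : ℝ, Real.sin t = Real.sin (2*t) * Real.cos t - Real.cos (2*t) * Real.sin t := by
    intro t
    have := Real.sin_sub (2*t) t
    rw [show 2*t - t = t by ring] at this
    linarith
  have h2 : ∀ t : ℝ, Real.cos t = Real.cos (2*t) * Real.cos t + Real.sin (2*t) * Real.sin t := by
    intro t
    have := Real.cos_sub (2*t) t
    rw [show 2*t - t = t by ring] at this
    linarith
  constructor
  · intro t
    have h := ((Real.hasDerivAt_cos t).mul (hw t).1).add ((Real.hasDerivAt_sin t).mul (hw t).2)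
    refine h.congr_deriv (Eq.symm ?_)
    linear_combination (c^2 * w₁ t) * h1 t - (c^2 * w₂ t) * h2 t
  · intro t
    have h := (((Real.hasDerivAt_sin t).neg).mul (hw t).1).add ((Real.hasDerivAt_cos t).mul (hw t).2)
    refine h.congr_deriv (Eq.symm ?_)
    rw [Pi.neg_apply]
    linear_combination (-(c^2 * w₁ t)) * h2 t - (c^2 * w₂ t) * h1 t

private lemma solKey (c : ℝ) (hc0 : 0 < c^2) (hc1 : c^2 < 1) (w₁ w₂ : ℝ → ℝ)
    (hw : ∀ t, HasDerivAt w₁ (c^2 * (Real.sin (2*t) * w₁ t - Real.cos (2*t) * w₂ t)) t ∧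
            HasDerivAt w₂ (c^2 * (-Real.cos (2*t) * w₁ t - Real.sin (2*t) * w₂ t)) t) :
    (∀ t, |w₁ t| ≤ (1 + (1+c^2)/Real.sqrt (1-c^4)) * |w₁ 0|
            + (1 + (1-c^2)/Real.sqrt (1-c^4)) * |w₂ 0| ∧
          |w₂ t| ≤ (1 + (1+c^2)/Real.sqrt (1-c^4)) * |w₁ 0|
            + (1 + (1-c^2)/Real.sqrt (1-c^4)) * |w₂ 0|) ∧
    w₁ (2*π) = Real.cos (2*π*Real.sqrt (1-c^4)) * w₁ 0
        + ((1-c^2)/Real.sqrt (1-c^4)) * Real.sin (2*π*Real.sqrt (1-c^4)) * w₂ 0 ∧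
    w₂ (2*π) = -(((1+c^2)/Real.sqrt (1-c^4)) * Real.sin (2*π*Real.sqrt (1-c^4))) * w₁ 0
        + Real.cos (2*π*Real.sqrt (1-c^4)) * w₂ 0 := by
  have h4 : (0:ℝ) < 1 - c^4 := by nlinarith
  set ω := Real.sqrt (1 - c^4) with hωdef
  have hωpos : 0 < ω := Real.sqrt_pos.mpr h4
  have hω2 : ω^2 = 1 - c^4 := Real.sq_sqrt h4.le
  set a := (1+c^2)/ω with hadef
  set b := (1-c^2)/ω with hbdef
  have hapos : 0 < a := by positivity
  have hbpos : 0 < b := div_pos (by linarith) hωpos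
  have hab : a * b = 1 := by
    rw [hadef, hbdef]; field_simp; nlinarith [hω2]
  have hbω : b * ω = 1 - c^2 := by rw [hbdef]; field_simp
  have haω2 : a * ω = 1 + c^2 := by rw [hadef]; field_simp
  have haω : b * (1 + c^2) = ω := by rw [hbdef]; field_simp; nlinarith [hω2]
  have haa : a * (1 - c^2) = ω := by rw [hadef]; field_simp; nlinarith [hω2]
  obtain ⟨hx, hy⟩ := xy_derivs c hw
  have hcosω : ∀ s : ℝ, HasDerivAt (fun u => Real.cos (ω*u)) (-Real.sin (ω*s) * ω) s := by
    intro s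
    have hlin : HasDerivAt (fun u : ℝ => ω * u) ω s := by
      simpa using (hasDerivAt_id s).const_mul ω
    exact (Real.hasDerivAt_cos (ω*s)).comp s hlin
  have hsinω : ∀ s : ℝ, HasDerivAt (fun u => Real.sin (ω*u)) (Real.cos (ω*s) * ω) s := by
    intro s
    have hlin : HasDerivAt (fun u : ℝ => ω * u) ω s := by
      simpa using (hasDerivAt_id s).const_mul ω
    exact (Real.hasDerivAt_sin (ω*s)).comp s hlin
  have hP : ∀ s, HasDerivAt (fun u => Real.cos (ω*u) * (Real.cos u * w₁ u + Real.sin u * w₂ u)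
      - b * (Real.sin (ω*u) * (-Real.sin u * w₁ u + Real.cos u * w₂ u))) 0 s := by
    intro s
    have h := ((hcosω s).mul (hx s)).sub (((hsinω s).mul (hy s)).const_mul b)
    refine h.congr_deriv (Eq.symm ?_)
    linear_combination
      (-(Real.sin (ω*s) * (Real.cos s * w₁ s + Real.sin s * w₂ s))) * haω
      + (Real.cos (ω*s) * (-Real.sin s * w₁ s + Real.cos s * w₂ s)) * hbω
  have hQ : ∀ s, HasDerivAt (fun u => a * (Real.sin (ω*u) * (Real.cos u * w₁ u + Real.sin u * w₂ u))
      + Real.cos (ω*u) * (-Real.sin u * w₁ u + Real.cos u * w₂ u)) 0 s := by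
    intro s
    have h := (((hsinω s).mul (hx s)).const_mul a).add ((hcosω s).mul (hy s))
    refine h.congr_deriv (Eq.symm ?_)
    linear_combination
      (-(Real.cos (ω*s) * (Real.cos s * w₁ s + Real.sin s * w₂ s))) * haω2
      + (-(Real.sin (ω*s) * (-Real.sin s * w₁ s + Real.cos s * w₂ s))) * haa
  have hPconst : ∀ s : ℝ, Real.cos (ω*s) * (Real.cos s * w₁ s + Real.sin s * w₂ s)
      - b * (Real.sin (ω*s) * (-Real.sin s * w₁ s + Real.cos s * w₂ s)) = w₁ 0 := by
    intro s
    have h := is_const_of_deriv_eq_zero (f := fun u => Real.cos (ω*u) * (Real.cos u * w₁ u + Real.sin u * w₂ u)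
      - b * (Real.sin (ω*u) * (-Real.sin u * w₁ u + Real.cos u * w₂ u)))
      (fun u => ((hP u)).differentiableAt) (fun u => (hP u).deriv) s 0
    simpa using h
  have hQconst : ∀ s : ℝ, a * (Real.sin (ω*s) * (Real.cos s * w₁ s + Real.sin s * w₂ s))
      + Real.cos (ω*s) * (-Real.sin s * w₁ s + Real.cos s * w₂ s) = w₂ 0 := by
    intro s
    have h := is_const_of_deriv_eq_zero (f := fun u => a * (Real.sin (ω*u) * (Real.cos u * w₁ u + Real.sin u * w₂ u))
      + Real.cos (ω*u) * (-Real.sin u * w₁ u + Real.cos u * w₂ u))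
      (fun u => ((hQ u)).differentiableAt) (fun u => (hQ u).deriv) s 0
    simpa using h
  -- recover x, y from the conserved quantities
  have hxeq : ∀ s : ℝ, Real.cos s * w₁ s + Real.sin s * w₂ s
      = Real.cos (ω*s) * w₁ 0 + b * (Real.sin (ω*s) * w₂ 0) := by
    intro s
    have hp := hPconst s; have hq := hQconst s
    have pyth := Real.sin_sq_add_cos_sq (ω*s)
    linear_combination Real.cos (ω*s) * hp + (b * Real.sin (ω*s)) * hq
      - ((Real.cos s * w₁ s + Real.sin s * w₂ s) * Real.sin (ω*s)^2) * hab
      - (Real.cos s * w₁ s + Real.sin s * w₂ s) * pyth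
  have hyeq : ∀ s : ℝ, -Real.sin s * w₁ s + Real.cos s * w₂ s
      = -(a * (Real.sin (ω*s) * w₁ 0)) + Real.cos (ω*s) * w₂ 0 := by
    intro s
    have hp := hPconst s; have hq := hQconst s
    have pyth := Real.sin_sq_add_cos_sq (ω*s)
    linear_combination (-(a * Real.sin (ω*s))) * hp + Real.cos (ω*s) * hq
      - ((-Real.sin s * w₁ s + Real.cos s * w₂ s) * Real.sin (ω*s)^2) * hab
      - (-Real.sin s * w₁ s + Real.cos s * w₂ s) * pyth
  -- bounds on x and y
  have hxb : ∀ s : ℝ, |Real.cos s * w₁ s + Real.sin s * w₂ s| ≤ |w₁ 0| + b * |w₂ 0| := by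
    intro s
    rw [hxeq s]
    have e1 : |Real.cos (ω*s) * w₁ 0| ≤ |w₁ 0| := by
      rw [abs_mul]; exact mul_le_of_le_one_left (abs_nonneg _) (Real.abs_cos_le_one _)
    have e2 : |Real.sin (ω*s) * w₂ 0| ≤ |w₂ 0| := by
      rw [abs_mul]; exact mul_le_of_le_one_left (abs_nonneg _) (Real.abs_sin_le_one _)
    calc |Real.cos (ω*s) * w₁ 0 + b * (Real.sin (ω*s) * w₂ 0)|
        ≤ |Real.cos (ω*s) * w₁ 0| + |b * (Real.sin (ω*s) * w₂ 0)| := abs_add_le _ _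
      _ ≤ |w₁ 0| + b * |w₂ 0| := by
          have e3 : |b * (Real.sin (ω*s) * w₂ 0)| = b * |Real.sin (ω*s) * w₂ 0| := by
            rw [abs_mul, abs_of_pos hbpos]
          rw [e3]
          have := mul_le_mul_of_nonneg_left e2 hbpos.le
          linarith
  have hyb : ∀ s : ℝ, |(-Real.sin s * w₁ s + Real.cos s * w₂ s)| ≤ a * |w₁ 0| + |w₂ 0| := by
    intro s
    rw [hyeq s]
    have e1 : |Real.sin (ω*s) * w₁ 0| ≤ |w₁ 0| := by
      rw [abs_mul]; exact mul_le_of_le_one_left (abs_nonneg _) (Real.abs_sin_le_one _)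
    have e2 : |Real.cos (ω*s) * w₂ 0| ≤ |w₂ 0| := by
      rw [abs_mul]; exact mul_le_of_le_one_left (abs_nonneg _) (Real.abs_cos_le_one _)
    calc |(-(a * (Real.sin (ω*s) * w₁ 0)) + Real.cos (ω*s) * w₂ 0)|
        ≤ |(-(a * (Real.sin (ω*s) * w₁ 0)))| + |Real.cos (ω*s) * w₂ 0| := abs_add_le _ _
      _ ≤ a * |w₁ 0| + |w₂ 0| := by
          have e3 : |(-(a * (Real.sin (ω*s) * w₁ 0)))| = a * |Real.sin (ω*s) * w₁ 0| := by
            rw [abs_neg, abs_mul, abs_of_pos hapos]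
          rw [e3]
          have := mul_le_mul_of_nonneg_left e1 hapos.le
          linarith
  refine ⟨?_, ?_, ?_⟩
  · intro t
    have hx' := hxb t; have hy' := hyb t
    have pyth := Real.sin_sq_add_cos_sq t
    have hw1 : w₁ t = Real.cos t * (Real.cos t * w₁ t + Real.sin t * w₂ t)
        - Real.sin t * (-Real.sin t * w₁ t + Real.cos t * w₂ t) := by
      linear_combination (-(w₁ t)) * pyth
    have hw2 : w₂ t = Real.sin t * (Real.cos t * w₁ t + Real.sin t * w₂ t)
        + Real.cos t * (-Real.sin t * w₁ t + Real.cos t * w₂ t) := by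
      linear_combination (-(w₂ t)) * pyth
    have ec := Real.abs_cos_le_one t
    have es := Real.abs_sin_le_one t
    have b1 : |Real.cos t * (Real.cos t * w₁ t + Real.sin t * w₂ t)|
        ≤ |Real.cos t * w₁ t + Real.sin t * w₂ t| := by
      rw [abs_mul]; exact mul_le_of_le_one_left (abs_nonneg _) ec
    have b2 : |Real.sin t * (-Real.sin t * w₁ t + Real.cos t * w₂ t)|
        ≤ |(-Real.sin t * w₁ t + Real.cos t * w₂ t)| := by
      rw [abs_mul]; exact mul_le_of_le_one_left (abs_nonneg _) es
    have b3 : |Real.sin t * (Real.cos t * w₁ t + Real.sin t * w₂ t)|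
        ≤ |Real.cos t * w₁ t + Real.sin t * w₂ t| := by
      rw [abs_mul]; exact mul_le_of_le_one_left (abs_nonneg _) es
    have b4 : |Real.cos t * (-Real.sin t * w₁ t + Real.cos t * w₂ t)|
        ≤ |(-Real.sin t * w₁ t + Real.cos t * w₂ t)| := by
      rw [abs_mul]; exact mul_le_of_le_one_left (abs_nonneg _) ec
    constructor
    · rw [hw1]
      calc |Real.cos t * (Real.cos t * w₁ t + Real.sin t * w₂ t)
            - Real.sin t * (-Real.sin t * w₁ t + Real.cos t * w₂ t)|
          ≤ |Real.cos t * (Real.cos t * w₁ t + Real.sin t * w₂ t)|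
            + |Real.sin t * (-Real.sin t * w₁ t + Real.cos t * w₂ t)| := abs_sub _ _
        _ ≤ (1 + a) * |w₁ 0| + (1 + b) * |w₂ 0| := by linarith
        _ = (1 + (1+c^2)/ω) * |w₁ 0| + (1 + (1-c^2)/ω) * |w₂ 0| := by rw [hadef, hbdef]
    · rw [hw2]
      calc |Real.sin t * (Real.cos t * w₁ t + Real.sin t * w₂ t)
            + Real.cos t * (-Real.sin t * w₁ t + Real.cos t * w₂ t)|
          ≤ |Real.sin t * (Real.cos t * w₁ t + Real.sin t * w₂ t)|
            + |Real.cos t * (-Real.sin t * w₁ t + Real.cos t * w₂ t)| := abs_add_le _ _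
        _ ≤ (1 + a) * |w₁ 0| + (1 + b) * |w₂ 0| := by linarith
        _ = (1 + (1+c^2)/ω) * |w₁ 0| + (1 + (1-c^2)/ω) * |w₂ 0| := by rw [hadef, hbdef]
  · have h := hxeq (2*π)
    rw [show ω*(2*π) = 2*π*ω by ring] at h
    simp only [Real.cos_two_pi, Real.sin_two_pi, one_mul, zero_mul, add_zero, mul_zero] at h
    linear_combination h
  · have h := hyeq (2*π)
    rw [show ω*(2*π) = 2*π*ω by ring] at h
    simp only [Real.cos_two_pi, Real.sin_two_pi, one_mul, zero_mul, add_zero, mul_zero, neg_zero,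
      neg_mul] at h
    linear_combination h

private lemma complexEq (c : ℝ) (w₁ w₂ : ℝ → ℝ) (t : ℝ) :
    (-Complex.I * Complex.exp (2 * Complex.I * t) * (c^2 : ℂ) *
        (starRingEnd ℂ) ((w₁ t : ℂ) + Complex.I * (w₂ t : ℂ)))
    = ((c^2 * (Real.sin (2*t) * w₁ t - Real.cos (2*t) * w₂ t) : ℝ) : ℂ)
      + Complex.I * ((c^2 * (-Real.cos (2*t) * w₁ t - Real.sin (2*t) * w₂ t) : ℝ) : ℂ) := by
  rw [show (2 : ℂ) * Complex.I * t = (((2*t : ℝ)) : ℂ) * Complex.I by push_cast; ring,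
    Complex.exp_mul_I]
  rw [map_add, map_mul, Complex.conj_I, Complex.conj_ofReal, Complex.conj_ofReal]
  rw [← Complex.ofReal_cos, ← Complex.ofReal_sin]
  simp only [Complex.ofReal_mul, Complex.ofReal_sub, Complex.ofReal_neg, Complex.ofReal_pow,
    Complex.ofReal_add]
  linear_combination ((c^2 : ℂ) * (Real.sin (2*t) : ℂ) * (w₂ t : ℂ) * Complex.I
    - (c^2 : ℂ) * (Real.sin (2*t) : ℂ) * (w₁ t : ℂ)
    + (c^2 : ℂ) * (Real.cos (2*t) : ℂ) * (w₂ t : ℂ)) * Complex.I_sq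

/-- For the variational system `(ẇ₁,ẇ₂)ᵀ = c²[[sin 2t, -cos 2t],[-cos 2t, -sin 2t]](w₁,w₂)ᵀ`
with `0 < c² < 1`: writing `z = w₁ + i w₂` the system is equivalent to the complex ODE
`ż = -i e^{2it} c² z̄`; all its solutions are bounded; and the characteristic (Floquet)
exponents are `±i√(1-c⁴)`, i.e. the monodromy matrix (fundamental solution at `2π`,
normalized to the identity at `0`) has eigenvalues `e^{±2πi√(1-c⁴)}`. -/
theorem stmt14 (c : ℝ) (hc0 : 0 < c^2) (hc1 : c^2 < 1) :
    -- equivalence with the complex ODE ż = -i e^{2it} c² z̄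
    (∀ w₁ w₂ : ℝ → ℝ,
      (∀ t, HasDerivAt w₁ (c^2 * (Real.sin (2*t) * w₁ t - Real.cos (2*t) * w₂ t)) t ∧
            HasDerivAt w₂ (c^2 * (-Real.cos (2*t) * w₁ t - Real.sin (2*t) * w₂ t)) t)
      ↔
      (∀ t : ℝ, HasDerivAt (fun s : ℝ => (w₁ s : ℂ) + Complex.I * (w₂ s : ℂ))
          (-Complex.I * Complex.exp (2 * Complex.I * t) * (c^2 : ℂ) *
            (starRingEnd ℂ) ((w₁ t : ℂ) + Complex.I * (w₂ t : ℂ))) t)) ∧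
    -- all solutions are bounded
    (∀ w₁ w₂ : ℝ → ℝ,
      (∀ t, HasDerivAt w₁ (c^2 * (Real.sin (2*t) * w₁ t - Real.cos (2*t) * w₂ t)) t ∧
            HasDerivAt w₂ (c^2 * (-Real.cos (2*t) * w₁ t - Real.sin (2*t) * w₂ t)) t) →
      ∃ M : ℝ, ∀ t, |w₁ t| ≤ M ∧ |w₂ t| ≤ M) ∧
    -- Floquet exponents ±i√(1-c⁴)
    (∀ W : ℝ → Matrix (Fin 2) (Fin 2) ℝ,
      W 0 = 1 →
      (∀ t i j, HasDerivAt (fun s => W s i j)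
        ((Matrix.of ![![c^2 * Real.sin (2*t), -(c^2 * Real.cos (2*t))],
                      ![-(c^2 * Real.cos (2*t)), -(c^2 * Real.sin (2*t))]] * W t) i j) t) →
      (∃ v : Fin 2 → ℂ, v ≠ 0 ∧
        ((W (2*π)).map (Complex.ofReal)).mulVec v
          = Complex.exp (2 * π * Complex.I * Real.sqrt (1 - c^4)) • v) ∧
      (∃ v : Fin 2 → ℂ, v ≠ 0 ∧
        ((W (2*π)).map (Complex.ofReal)).mulVec v
          = Complex.exp (-(2 * π * Complex.I * Real.sqrt (1 - c^4))) • v)) := by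
  have h4 : (0:ℝ) < 1 - c^4 := by nlinarith
  refine ⟨?_, ?_, ?_⟩
  · -- equivalence
    intro w₁ w₂
    constructor
    · intro hw t
      have h := (((hw t).1).ofReal_comp).add ((((hw t).2).ofReal_comp).const_mul Complex.I)
      rw [complexEq c w₁ w₂ t]
      exact h
    · intro hz
      intro t
      have h := hz t
      rw [complexEq c w₁ w₂ t] at h
      constructor
      · have hre := Complex.reCLM.hasFDerivAt.comp_hasDerivAt t h
        simp only [Function.comp_def, Complex.reCLM_apply, Complex.add_re, Complex.mul_re,
          Complex.I_re, Complex.I_im, Complex.ofReal_re, Complex.ofReal_im, zero_mul, one_mul,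
          mul_zero, sub_zero, add_zero, zero_sub, neg_zero, neg_neg] at hre
        exact hre
      · have him := Complex.imCLM.hasFDerivAt.comp_hasDerivAt t h
        simp only [Function.comp_def, Complex.imCLM_apply, Complex.add_im, Complex.mul_im,
          Complex.I_re, Complex.I_im, Complex.ofReal_re, Complex.ofReal_im, zero_mul, one_mul,
          mul_zero, zero_add, add_zero, mul_one] at him
        exact him
  · -- boundedness
    intro w₁ w₂ hw
    obtain ⟨hb, -, -⟩ := solKey c hc0 hc1 w₁ w₂ hw
    exact ⟨_, hb⟩
  · -- Floquet
    intro W hW0 hW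
    set ω := Real.sqrt (1 - c^4) with hωdef
    have hωpos : 0 < ω := Real.sqrt_pos.mpr h4
    have hω2 : ω^2 = 1 - c^4 := Real.sq_sqrt h4.le
    set a := (1+c^2)/ω with hadef
    set b := (1-c^2)/ω with hbdef
    have hbpos : 0 < b := div_pos (by linarith) hωpos
    have hab : a * b = 1 := by
      rw [hadef, hbdef]; field_simp; nlinarith [hω2]
    -- each column solves the system
    have hcol : ∀ j : Fin 2,
        W (2*π) 0 j = Real.cos (2*π*ω) * W 0 0 j + b * Real.sin (2*π*ω) * W 0 1 j ∧
        W (2*π) 1 j = -(a * Real.sin (2*π*ω)) * W 0 0 j + Real.cos (2*π*ω) * W 0 1 j := by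
      intro j
      have hsol : ∀ t, HasDerivAt (fun s => W s 0 j)
          (c^2 * (Real.sin (2*t) * W t 0 j - Real.cos (2*t) * W t 1 j)) t ∧
          HasDerivAt (fun s => W s 1 j)
          (c^2 * (-Real.cos (2*t) * W t 0 j - Real.sin (2*t) * W t 1 j)) t := by
        intro t
        constructor
        · have h := hW t 0 j
          convert h using 1
          simp [Matrix.mul_apply, Fin.sum_univ_two]
          ring
        · have h := hW t 1 j
          convert h using 1
          simp [Matrix.mul_apply, Fin.sum_univ_two]
          ring
      obtain ⟨-, h1, h2⟩ := solKey c hc0 hc1 (fun s => W s 0 j) (fun s => W s 1 j) hsol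
      exact ⟨h1, h2⟩
    have e00 : W (2*π) 0 0 = Real.cos (2*π*ω) := by
      have := (hcol 0).1; rw [hW0] at this; simpa using this
    have e10 : W (2*π) 1 0 = -(a * Real.sin (2*π*ω)) := by
      have := (hcol 0).2; rw [hW0] at this; simpa using this
    have e01 : W (2*π) 0 1 = b * Real.sin (2*π*ω) := by
      have := (hcol 1).1; rw [hW0] at this; simpa using this
    have e11 : W (2*π) 1 1 = Real.cos (2*π*ω) := by
      have := (hcol 1).2; rw [hW0] at this; simpa using this
    have hexp : Complex.exp (2 * π * Complex.I * (ω:ℝ))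
        = ((Real.cos (2*π*ω) : ℝ) : ℂ) + ((Real.sin (2*π*ω) : ℝ) : ℂ) * Complex.I := by
      rw [show (2:ℂ) * π * Complex.I * (ω:ℝ) = (((2*π*ω : ℝ)) : ℂ) * Complex.I by
        push_cast; ring, Complex.exp_mul_I, ← Complex.ofReal_cos, ← Complex.ofReal_sin]
    have hexp' : Complex.exp (-(2 * π * Complex.I * (ω:ℝ)))
        = ((Real.cos (2*π*ω) : ℝ) : ℂ) - ((Real.sin (2*π*ω) : ℝ) : ℂ) * Complex.I := by
      rw [show -((2:ℂ) * π * Complex.I * (ω:ℝ)) = (((-(2*π*ω) : ℝ)) : ℂ) * Complex.I by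
        push_cast; ring, Complex.exp_mul_I, ← Complex.ofReal_cos, ← Complex.ofReal_sin,
        Real.cos_neg, Real.sin_neg]
      push_cast
      ring
    have habC : ((a : ℂ)) * ((b : ℂ)) = 1 := by
      rw [← Complex.ofReal_mul, hab, Complex.ofReal_one]
    constructor
    · refine ⟨![(b : ℂ), Complex.I], ?_, ?_⟩
      · intro hv
        have := congrFun hv 1
        simp [Complex.I_ne_zero] at this
      · funext i
        fin_cases i
        · simp only [Matrix.mulVec, dotProduct, Fin.sum_univ_two, Matrix.map_apply,
            Matrix.cons_val_zero, Matrix.cons_val_one, Matrix.head_cons, Pi.smul_apply,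
            smul_eq_mul, Fin.isValue, Fin.mk_zero, Fin.mk_one]
          rw [e00, e01, hexp]
          push_cast
          ring
        · simp only [Matrix.mulVec, dotProduct, Fin.sum_univ_two, Matrix.map_apply,
            Matrix.cons_val_zero, Matrix.cons_val_one, Matrix.head_cons, Pi.smul_apply,
            smul_eq_mul, Fin.isValue, Fin.mk_zero, Fin.mk_one]
          rw [e10, e11, hexp]
          push_cast
          linear_combination (-(Complex.sin (2*(π:ℂ)*(ω:ℂ)))) * habC
            - Complex.sin (2*(π:ℂ)*(ω:ℂ)) * Complex.I_sq
    · refine ⟨![(b : ℂ), -Complex.I], ?_, ?_⟩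
      · intro hv
        have := congrFun hv 1
        simp [Complex.I_ne_zero] at this
      · funext i
        fin_cases i
        · simp only [Matrix.mulVec, dotProduct, Fin.sum_univ_two, Matrix.map_apply,
            Matrix.cons_val_zero, Matrix.cons_val_one, Matrix.head_cons, Pi.smul_apply,
            smul_eq_mul, Fin.isValue, Fin.mk_zero, Fin.mk_one]
          rw [e00, e01, hexp']
          push_cast
          ring
        · simp only [Matrix.mulVec, dotProduct, Fin.sum_univ_two, Matrix.map_apply,
            Matrix.cons_val_zero, Matrix.cons_val_one, Matrix.head_cons, Pi.smul_apply,
            smul_eq_mul, Fin.isValue, Fin.mk_zero, Fin.mk_one]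
          rw [e10, e11, hexp']
          push_cast
          linear_combination (-(Complex.sin (2*(π:ℂ)*(ω:ℂ)))) * habC
            - Complex.sin (2*(π:ℂ)*(ω:ℂ)) * Complex.I_sq
end

section
/- The hyperbolic periodic orbit r_-(t) = (a_- cos t, a_- sin t) of the system ẋ = (-y - a sin t)/Ṽ, ẏ = (x + a cos t)/Ṽ has characteristic exponents ±√(a_-⁴ - 1): the monodromy matrix of the variational equation along r_- has eigenvalues e^{±2π√(a_-⁴-1)}. -/
open Real

lemma aux15 (b m : ℝ) (hb : 1 < b) (hm : m^2 = b^2 - 1)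
    (W : ℝ → Matrix (Fin 2) (Fin 2) ℝ) (hW0 : W 0 = 1)
    (hW : ∀ t i j, HasDerivAt (fun s => W s i j)
      ((Matrix.of ![![b * Real.sin (2*t), -(b * Real.cos (2*t))],
                    ![-(b * Real.cos (2*t)), -(b * Real.sin (2*t))]] * W t) i j) t) :
    ∃ v : Fin 2 → ℝ, v ≠ 0 ∧
      (W (2*π)).mulVec v = Real.exp (2 * π * m) • v := by
  set A : ℝ → Matrix (Fin 2) (Fin 2) ℝ := fun t =>
    Matrix.of ![![b * Real.sin (2*t), -(b * Real.cos (2*t))],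
                ![-(b * Real.cos (2*t)), -(b * Real.sin (2*t))]] with hA
  set v : Fin 2 → ℝ := ![1 - b, m] with hv
  refine ⟨v, ?_, ?_⟩
  · intro h
    have h0 : v 0 = 0 := by rw [h]; rfl
    simp only [hv, Matrix.cons_val_zero] at h0
    linarith
  set u : ℝ → (Fin 2 → ℝ) := fun t => (W t).mulVec v with hu
  set g : ℝ → (Fin 2 → ℝ) := fun t =>
    ![Real.exp (m*t) * ((1-b) * Real.cos t - m * Real.sin t),
      Real.exp (m*t) * ((1-b) * Real.sin t + m * Real.cos t)] with hg
  -- derivative of u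
  have hu' : ∀ t, HasDerivAt u ((A t).mulVec (u t)) t := by
    intro t
    rw [hasDerivAt_pi]
    intro i
    have h1 : HasDerivAt (fun s => W s i 0 * v 0 + W s i 1 * v 1)
        ((A t * W t) i 0 * v 0 + (A t * W t) i 1 * v 1) t :=
      ((hW t i 0).mul_const (v 0)).add ((hW t i 1).mul_const (v 1))
    have e1 : (fun s => W s i 0 * v 0 + W s i 1 * v 1) = fun s => u s i := by
      funext s
      simp [hu, Matrix.mulVec, dotProduct, Fin.sum_univ_two]
      fin_cases i <;> rfl
    have e2 : (A t * W t) i 0 * v 0 + (A t * W t) i 1 * v 1 = (A t).mulVec (u t) i := by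
      simp only [hu, Matrix.mulVec_mulVec]
      simp only [Matrix.mulVec, dotProduct, Fin.sum_univ_two, Matrix.mul_apply]
    rw [e1, e2] at h1
    exact h1
  -- derivative of g
  have hg' : ∀ t, HasDerivAt g ((A t).mulVec (g t)) t := by
    intro t
    rw [hasDerivAt_pi]
    have hexp : HasDerivAt (fun s => Real.exp (m*s)) (Real.exp (m*t) * m) t := by
      simpa using (((hasDerivAt_id t).const_mul m).exp)
    have s2 := Real.sin_two_mul t
    have c2 := Real.cos_two_mul' t
    have pyth := Real.sin_sq_add_cos_sq t
    intro i
    fin_cases i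
    · have h1 : HasDerivAt (fun s => Real.exp (m*s) * ((1-b) * Real.cos s - m * Real.sin s))
          (Real.exp (m*t) * m * ((1-b) * Real.cos t - m * Real.sin t) +
           Real.exp (m*t) * ((1-b) * (-Real.sin t) - m * Real.cos t)) t :=
        hexp.mul (((Real.hasDerivAt_cos t).const_mul (1-b)).sub
          ((Real.hasDerivAt_sin t).const_mul m))
      convert h1 using 1
      show (A t).mulVec (g t) 0 = _
      simp only [hg, hA, Matrix.mulVec, dotProduct, Fin.sum_univ_two,
        Matrix.cons_val_zero, Matrix.cons_val_one, Matrix.head_cons, Matrix.of_apply]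
      rw [s2, c2]
      linear_combination (Real.exp (m*t) * (b*(1-b)*Real.sin t - b*m*Real.cos t)) * pyth
        + (Real.exp (m*t) * Real.sin t) * hm
      all_goals rfl
    · have h1 : HasDerivAt (fun s => Real.exp (m*s) * ((1-b) * Real.sin s + m * Real.cos s))
          (Real.exp (m*t) * m * ((1-b) * Real.sin t + m * Real.cos t) +
           Real.exp (m*t) * ((1-b) * Real.cos t + m * (-Real.sin t))) t :=
        hexp.mul (((Real.hasDerivAt_sin t).const_mul (1-b)).add
          ((Real.hasDerivAt_cos t).const_mul m))
      convert h1 using 1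
      show (A t).mulVec (g t) 1 = _
      simp only [hg, hA, Matrix.mulVec, dotProduct, Fin.sum_univ_two,
        Matrix.cons_val_zero, Matrix.cons_val_one, Matrix.head_cons, Matrix.of_apply]
      rw [s2, c2]
      linear_combination (Real.exp (m*t) * (-(b*(1-b)*Real.cos t) - b*m*Real.sin t)) * pyth
        + (-(Real.exp (m*t) * Real.cos t)) * hm
      all_goals rfl
  -- Lipschitz bound
  have hb0 : (0:ℝ) < b := by linarith
  have hK : ∀ t, LipschitzWith ((2*b).toNNReal) (fun x : Fin 2 → ℝ => (A t).mulVec x) := by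
    intro t
    rw [lipschitzWith_iff_dist_le_mul]
    intro x y
    have hcoe : ((2*b).toNNReal : ℝ) = 2*b := Real.coe_toNNReal _ (by linarith)
    rw [hcoe]
    rw [dist_pi_le_iff (by positivity)]
    intro i
    have hd0 : |x 0 - y 0| ≤ dist x y := by
      simpa [Real.dist_eq] using dist_le_pi_dist x y 0
    have hd1 : |x 1 - y 1| ≤ dist x y := by
      simpa [Real.dist_eq] using dist_le_pi_dist x y 1
    have hdnn : (0:ℝ) ≤ dist x y := dist_nonneg
    have hp : |A t i 0| ≤ b := by
      fin_cases i <;>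
        simp only [hA, Matrix.of_apply, Matrix.cons_val_zero, Matrix.cons_val_one,
          Matrix.head_cons, Fin.mk_zero, Fin.mk_one, abs_neg, abs_mul, abs_of_pos hb0] <;>
        nlinarith [abs_sin_le_one (2*t), abs_cos_le_one (2*t), abs_nonneg (Real.sin (2*t)),
          abs_nonneg (Real.cos (2*t))]
    have hq : |A t i 1| ≤ b := by
      fin_cases i <;>
        simp only [hA, Matrix.of_apply, Matrix.cons_val_zero, Matrix.cons_val_one,
          Matrix.head_cons, Fin.mk_zero, Fin.mk_one, abs_neg, abs_mul, abs_of_pos hb0] <;>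
        nlinarith [abs_sin_le_one (2*t), abs_cos_le_one (2*t), abs_nonneg (Real.sin (2*t)),
          abs_nonneg (Real.cos (2*t))]
    have hgoal : dist ((A t).mulVec x i) ((A t).mulVec y i)
        = |A t i 0 * (x 0 - y 0) + A t i 1 * (x 1 - y 1)| := by
      rw [Real.dist_eq]
      congr 1
      simp only [Matrix.mulVec, dotProduct, Fin.sum_univ_two]
      ring
    rw [hgoal]
    have t1 : |A t i 0 * (x 0 - y 0)| ≤ b * dist x y := by
      rw [abs_mul]
      exact mul_le_mul hp hd0 (abs_nonneg _) hb0.le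
    have t2 : |A t i 1 * (x 1 - y 1)| ≤ b * dist x y := by
      rw [abs_mul]
      exact mul_le_mul hq hd1 (abs_nonneg _) hb0.le
    calc |A t i 0 * (x 0 - y 0) + A t i 1 * (x 1 - y 1)|
        ≤ |A t i 0 * (x 0 - y 0)| + |A t i 1 * (x 1 - y 1)| := abs_add_le _ _
      _ ≤ 2 * b * dist x y := by linarith
  -- initial conditions
  have hu0 : u 0 = v := by simp [hu, hW0, Matrix.one_mulVec]; funext i; fin_cases i <;> rfl
  have hg0 : g 0 = v := by
    funext i
    fin_cases i <;> simp [hg, hv]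
  -- uniqueness
  have heq : Set.EqOn u g (Set.Icc 0 (2*π)) := by
    apply ODE_solution_unique (v := fun t x => (A t).mulVec x) hK
    · exact fun t _ => (hu' t).continuousAt.continuousWithinAt
    · exact fun t _ => ((hu' t).hasDerivWithinAt)
    · exact fun t _ => (hg' t).continuousAt.continuousWithinAt
    · exact fun t _ => ((hg' t).hasDerivWithinAt)
    · rw [hu0, hg0]
  have h2π : u (2*π) = g (2*π) :=
    heq ⟨by positivity, le_refl _⟩
  rw [show (W (2*π)).mulVec v = u (2*π) from rfl, h2π]
  funext i
  fin_cases i <;>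
    simp [hg, hv, Real.sin_two_pi, Real.cos_two_pi, mul_comm m (2*π)]

/-- The hyperbolic periodic orbit `r_-(t) = (a_- cos t, a_- sin t)` (with
`a_- = (-a - √(a²+4))/2`, `a > 0`) has characteristic exponents `±√(a_-⁴ - 1)`:
the monodromy matrix of the variational equation
`(ẇ₁,ẇ₂)ᵀ = a_-²[[sin 2t, -cos 2t],[-cos 2t, -sin 2t]](w₁,w₂)ᵀ` along `r_-`
(the fundamental solution at `t = 2π`, normalized to the identity at `0`) has
eigenvalues `e^{±2π√(a_-⁴-1)}`. -/
theorem stmt15 (a : ℝ) (ha : 0 < a)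
    (am : ℝ) (ham : am = (-a - Real.sqrt (a^2 + 4)) / 2)
    (W : ℝ → Matrix (Fin 2) (Fin 2) ℝ)
    (hW0 : W 0 = 1)
    (hW : ∀ t i j, HasDerivAt (fun s => W s i j)
      ((Matrix.of ![![am^2 * Real.sin (2*t), -(am^2 * Real.cos (2*t))],
                    ![-(am^2 * Real.cos (2*t)), -(am^2 * Real.sin (2*t))]] * W t) i j) t) :
    (∃ v : Fin 2 → ℝ, v ≠ 0 ∧
      (W (2*π)).mulVec v = Real.exp (2 * π * Real.sqrt (am^4 - 1)) • v) ∧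
    (∃ v : Fin 2 → ℝ, v ≠ 0 ∧
      (W (2*π)).mulVec v = Real.exp (-(2 * π * Real.sqrt (am^4 - 1))) • v) := by
  have hs : 2 < Real.sqrt (a^2 + 4) := by
    rw [show (2:ℝ) = Real.sqrt 4 by
      rw [show (4:ℝ) = 2^2 by norm_num, Real.sqrt_sq (by norm_num)]]
    exact Real.sqrt_lt_sqrt (by norm_num) (by nlinarith)
  have ham1 : am < -1 := by rw [ham]; linarith
  have hb : 1 < am^2 := by nlinarith
  have h4 : (0:ℝ) ≤ am^4 - 1 := by nlinarith
  set μ : ℝ := Real.sqrt (am^4 - 1) with hμ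
  have hμ2 : μ^2 = (am^2)^2 - 1 := by
    rw [hμ, Real.sq_sqrt h4]; ring
  constructor
  · exact aux15 (am^2) μ hb hμ2 W hW0 hW
  · have hμ2' : (-μ)^2 = (am^2)^2 - 1 := by rw [show (-μ)^2 = μ^2 by ring]; exact hμ2
    obtain ⟨v, hv, hve⟩ := aux15 (am^2) (-μ) hb hμ2' W hW0 hW
    refine ⟨v, hv, ?_⟩
    rw [hve]
    congr 1
    ring
end
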